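/- Let ξ^(s) : T^d → ℝ be nonnegative measurable functions in L^p (p ≥ 1), with pointwise radii of convergence R(a) of ∑_{s≥1} ξ^(s)(a) t^s, and R_inf = ess inf_a R(a). Assume that for every t with 0 ≤ t < R_inf the sum ξ(a,t) = ∑_{s≥1} ξ^(s)(a) t^s belongs to L^p. Then R_p ≥ R_inf, where R_p is the radius of convergence of ∑_{s≥1} ‖ξ^(s)‖_p t^s. -/

import Mathlib

open MeasureTheory
open scoped ENNReal

/-- The radius of convergence of the power series `∑ c s * t ^ s`. -/
noncomputable def seriesRadius (c : ℕ → ℝ) : ℝ≥0∞ :=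
  sSup {r : ℝ≥0∞ | ∃ t : ℝ, r = ENNReal.ofReal t ∧ Summable (fun s : ℕ => c s * t ^ s)}

/-- For nonnegative measurable `ξ s` in `L^p` on the torus, if for every
`0 ≤ t < R_inf = ess inf_a R(a)` the sum `ξ(a,t) = ∑ ξ s a * t^s` belongs to `L^p`,
then the radius of convergence `R_p` of the series of `L^p` norms satisfies
`R_p ≥ R_inf`. -/
theorem stmt2 (d : ℕ) (p : ℝ≥0∞) (hp : 1 ≤ p)
    (ξ : ℕ → (Fin d → AddCircle (1:ℝ)) → ℝ)
    (hmeas : ∀ s, Measurable (ξ s))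
    (hpos : ∀ s a, 0 ≤ ξ s a)
    (hLp : ∀ s, MemLp (ξ s) p volume)
    (hsum : ∀ t : ℝ, 0 ≤ t →
      ENNReal.ofReal t < essInf (fun a => seriesRadius (fun s => ξ s a)) volume →
      MemLp (fun a => ∑' s : ℕ, ξ s a * t ^ s) p volume) :
    essInf (fun a => seriesRadius (fun s => ξ s a)) volume ≤
      seriesRadius (fun s => (eLpNorm (ξ s) p volume).toReal) := by
  set Rinf := essInf (fun a => seriesRadius (fun s => ξ s a)) volume with hRinf
  refine le_of_forall_lt fun r hr => ?_
  -- choose x, y with r < x < y < Rinf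
  obtain ⟨x, hrx, hxR⟩ := exists_between hr
  obtain ⟨y, hxy, hyR⟩ := exists_between hxR
  have hxtop : x ≠ ⊤ := (hxy.trans (hyR.trans_le le_top)).ne
  have hytop : y ≠ ⊤ := (hyR.trans_le le_top).ne
  set t : ℝ := x.toReal with ht
  set t' : ℝ := y.toReal with ht'
  have hx0 : 0 < x := lt_of_le_of_lt (zero_le : 0 ≤ r) hrx
  have ht0 : 0 < t := ENNReal.toReal_pos hx0.ne' hxtop
  have htt' : t < t' := by
    rwa [ht, ht', ENNReal.toReal_lt_toReal hxtop hytop]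
  have ht'0 : 0 < t' := ht0.trans htt'
  have hofx : ENNReal.ofReal t = x := ENNReal.ofReal_toReal hxtop
  have hofy : ENNReal.ofReal t' = y := ENNReal.ofReal_toReal hytop
  -- a.e., the series at t' is summable with each term ≤ the tsum
  have hae : ∀ᵐ a ∂(volume : Measure (Fin d → AddCircle (1:ℝ))),
      Summable (fun s : ℕ => ξ s a * t' ^ s) := by
    have hlt' : ENNReal.ofReal t' < essInf (fun a => seriesRadius (fun s => ξ s a)) volume := by
      rw [hofy]; exact hyR
    filter_upwards [ae_lt_of_lt_essInf hlt'] with a ha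
    -- seriesRadius > ofReal t', so there is u > t' with summability at u
    have : ∃ r' ∈ {r : ℝ≥0∞ | ∃ u : ℝ, r = ENNReal.ofReal u ∧
        Summable (fun s : ℕ => ξ s a * u ^ s)}, ENNReal.ofReal t' < r' := by
      by_contra hcon
      push_neg at hcon
      exact absurd (sSup_le fun b hb => hcon b hb) (not_le.mpr ha)
    obtain ⟨r', ⟨u, rfl, hu⟩, hlt⟩ := this
    have ht'u : t' ≤ u := by
      by_contra h
      exact absurd (ENNReal.ofReal_le_ofReal (le_of_not_ge h)) (not_le.mpr hlt)
    exact hu.of_nonneg_of_le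
      (fun s => mul_nonneg (hpos s a) (pow_nonneg ht'0.le _))
      (fun s => mul_le_mul_of_nonneg_left
        (pow_le_pow_left₀ ht'0.le ht'u s) (hpos s a))
  -- F = sum at t' is in L^p
  have hF : MemLp (fun a => ∑' s : ℕ, ξ s a * t' ^ s) p volume :=
    hsum t' ht'0.le (by rw [hofy]; exact hyR)
  set C : ℝ≥0∞ := eLpNorm (fun a => ∑' s : ℕ, ξ s a * t' ^ s) p volume with hC
  have hCtop : C ≠ ⊤ := hF.2.ne
  -- key bound: ofReal (t'^s) * eLpNorm (ξ s) ≤ C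
  have hkey : ∀ s : ℕ, ENNReal.ofReal (t' ^ s) * eLpNorm (ξ s) p volume ≤ C := by
    intro s
    have hsmul : eLpNorm (fun a => t' ^ s * ξ s a) p volume
        = ENNReal.ofReal (t' ^ s) * eLpNorm (ξ s) p volume := by
      calc eLpNorm (fun a => t' ^ s * ξ s a) p volume
          = eLpNorm ((t' ^ s : ℝ) • ξ s) p volume := rfl
        _ = (‖(t' ^ s : ℝ)‖₊ : ℝ≥0∞) * eLpNorm (ξ s) p volume :=
            eLpNorm_const_smul _ _ _ _
        _ = ENNReal.ofReal (t' ^ s) * eLpNorm (ξ s) p volume := by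
            rw [show (‖(t' ^ s : ℝ)‖₊ : ℝ≥0∞) = ENNReal.ofReal (t' ^ s) from Real.enorm_eq_ofReal (by positivity)]
    rw [← hsmul]
    refine eLpNorm_mono_ae ?_
    filter_upwards [hae] with a ha
    rw [Real.norm_eq_abs, Real.norm_eq_abs,
      abs_of_nonneg (mul_nonneg (pow_nonneg ht'0.le s) (hpos s a)),
      abs_of_nonneg (tsum_nonneg (fun s =>
        mul_nonneg (hpos s a) (pow_nonneg ht'0.le _)))]
    rw [mul_comm]
    exact Summable.le_tsum ha s (fun j _ =>
      mul_nonneg (hpos j a) (pow_nonneg ht'0.le _))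
  -- hence summability of the L^p norm series at t
  have hsummable : Summable (fun s : ℕ => (eLpNorm (ξ s) p volume).toReal * t ^ s) := by
    have hgeo : Summable (fun s : ℕ => C.toReal * (t / t') ^ s) := by
      apply Summable.mul_left
      refine summable_geometric_of_lt_one (by positivity) ?_
      rw [div_lt_one ht'0]; exact htt'
    refine hgeo.of_nonneg_of_le (fun s => mul_nonneg ENNReal.toReal_nonneg
      (pow_nonneg ht0.le _)) (fun s => ?_)
    have h1 : (eLpNorm (ξ s) p volume).toReal ≤ C.toReal / t' ^ s := by
      rw [le_div_iff₀ (by positivity)]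
      have := hkey s
      have hfin : eLpNorm (ξ s) p volume ≠ ⊤ := (hLp s).2.ne
      calc (eLpNorm (ξ s) p volume).toReal * t' ^ s
          = (ENNReal.ofReal (t' ^ s) * eLpNorm (ξ s) p volume).toReal := by
            rw [ENNReal.toReal_mul, ENNReal.toReal_ofReal (by positivity), mul_comm]
        _ ≤ C.toReal := ENNReal.toReal_mono hCtop this
    calc (eLpNorm (ξ s) p volume).toReal * t ^ s
        ≤ (C.toReal / t' ^ s) * t ^ s :=
          mul_le_mul_of_nonneg_right h1 (pow_nonneg ht0.le _)
      _ = C.toReal * (t / t') ^ s := by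
          rw [div_pow]; ring
  -- conclude
  refine lt_of_lt_of_le ?_ (le_sSup ⟨t, rfl, hsummable⟩)
  rw [hofx]; exact hrx
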